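/- Let (ā_n)_{n≥1} be a sequence of nonnegative reals whose formal generating function w(z) = Σ_{n≥1} ā_n zⁿ satisfies the identity w = t z ε(1+w)/(1 - ε(1+w)) as formal power series, where t > 0 and 0 < ε < 1. Set c = 1/√ε - 1 and suppose t ≤ c². Then for each n ≥ 1, ā_n ≤ c · tⁿ · c^{-2n}. -/

import Mathlib

open PowerSeries

/-- If the generating function `w(z) = Σ_{n≥1} ā_n zⁿ` of nonnegative coefficients
satisfies `w = t z ε(1+w)/(1-ε(1+w))` as formal power series (equivalently
`w(1 - ε(1+w)) = tε z (1+w)`), `c = 1/√ε - 1`, and `t ≤ c²`, then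
`ā_n ≤ c tⁿ c^{-2n}` for all `n ≥ 1`. -/
theorem coeff_bound_of_generating_identity (t ε : ℝ) (ht : 0 < t) (hε0 : 0 < ε)
    (hε1 : ε < 1) (c : ℝ) (hc : c = 1 / Real.sqrt ε - 1) (htc : t ≤ c ^ 2)
    (a : ℕ → ℝ) (ha : ∀ n, 1 ≤ n → 0 ≤ a n)
    (w : PowerSeries ℝ)
    (hw0 : PowerSeries.coeff 0 w = 0)
    (hwc : ∀ n, 1 ≤ n → PowerSeries.coeff n w = a n)
    (hid : w * (1 - PowerSeries.C ε * (1 + w))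
      = PowerSeries.C (t * ε) * PowerSeries.X * (1 + w)) :
    ∀ n, 1 ≤ n → a n ≤ c * t ^ n / c ^ (2 * n) := by
  have hs0 : (0:ℝ) < Real.sqrt ε := Real.sqrt_pos.mpr hε0
  have hs1 : Real.sqrt ε < 1 := by
    nlinarith [Real.sq_sqrt hε0.le, Real.sqrt_nonneg ε]
  have hs2 : Real.sqrt ε ^ 2 = ε := Real.sq_sqrt hε0.le
  have hcpos : 0 < c := by
    have h1 : 1 < 1 / Real.sqrt ε := by rw [lt_div_iff₀ hs0]; linarith
    rw [hc]; linarith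
  have hkey : ε * c * (2 + c) = 1 - ε := by
    rw [hc, ← hs2]; field_simp; rw [Real.sqrt_sq hs0.le]; ring
  have h1ε : (0:ℝ) < 1 - ε := by linarith
  set A : ℕ → ℝ := fun n => PowerSeries.coeff n w with hA
  have hA0 : A 0 = 0 := hw0
  have hAnn : ∀ n, 0 ≤ A n := by
    intro n
    cases n with
    | zero => rw [hA0]
    | succ m =>
      have := ha (m+1) (Nat.le_add_left 1 m)
      rw [← hwc (m+1) (Nat.le_add_left 1 m)] at this
      exact this
  -- recursion
  have hrec : ∀ m : ℕ, (1 - ε) * A (m+1)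
      = t * ε * ((if m = 0 then (1:ℝ) else 0) + A m)
        + ε * ∑ p ∈ Finset.HasAntidiagonal.antidiagonal (m+1), A p.1 * A p.2 := by
    intro m
    have hid' : w - PowerSeries.C ε * w - PowerSeries.C ε * (w * w)
        = PowerSeries.C (t*ε) * PowerSeries.X + PowerSeries.C (t*ε) * (PowerSeries.X * w) := by
      linear_combination hid
    have h := congrArg (PowerSeries.coeff (m+1)) hid'
    simp only [map_sub, map_add, PowerSeries.coeff_C_mul, PowerSeries.coeff_succ_X_mul,
      PowerSeries.coeff_X] at h
    rw [PowerSeries.coeff_mul] at h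
    have hif : ((if m + 1 = 1 then (1:ℝ) else 0) = if m = 0 then 1 else 0) := by
      rcases m with _ | m <;> simp
    rw [hif] at h
    simp only [hA]
    linarith [h]
  set x : ℝ := c^2 / t with hxdef
  have hx : 0 < x := div_pos (pow_pos hcpos 2) ht
  have htx : t * x = c^2 := by rw [hxdef]; field_simp
  have hg : ∀ n, 0 ≤ A n * x^n := fun n => mul_nonneg (hAnn n) (pow_pos hx n).le
  -- partial sums bounded by c
  have main : ∀ N : ℕ, ∑ n ∈ Finset.range (N+1), A n * x^n ≤ c := by
    intro N
    induction N with
    | zero => simpa [hA0] using hcpos.le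
    | succ N ih =>
      -- double sum bound
      have hds : ∑ m ∈ Finset.range (N+1), ∑ p ∈ Finset.HasAntidiagonal.antidiagonal (m+1),
            (A p.1 * x^p.1) * (A p.2 * x^p.2)
          ≤ (∑ n ∈ Finset.range (N+1), A n * x^n) * (∑ n ∈ Finset.range (N+1), A n * x^n) := by
        rw [← Finset.sum_biUnion]
        · have hfilter : ∑ p ∈ ((Finset.range (N+1)).biUnion
                (fun m => Finset.HasAntidiagonal.antidiagonal (m+1))).filter (fun p => p.1 ≠ 0 ∧ p.2 ≠ 0),
                (A p.1 * x^p.1) * (A p.2 * x^p.2)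
              = ∑ p ∈ (Finset.range (N+1)).biUnion (fun m => Finset.HasAntidiagonal.antidiagonal (m+1)),
                (A p.1 * x^p.1) * (A p.2 * x^p.2) := by
            apply Finset.sum_filter_of_ne
            rintro ⟨p1, p2⟩ _ hne
            constructor
            · rintro rfl; simp [hA0] at hne
            · rintro rfl; simp [hA0] at hne
          rw [← hfilter, Finset.sum_mul_sum, ← Finset.sum_product']
          apply Finset.sum_le_sum_of_subset_of_nonneg
          · intro p hp
            simp only [Finset.mem_filter, Finset.mem_biUnion, Finset.mem_range,
              Finset.HasAntidiagonal.mem_antidiagonal] at hp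
            obtain ⟨⟨m, hm, hpm⟩, h1, h2⟩ := hp
            simp only [Finset.mem_product, Finset.mem_range]
            omega
          · intro p _ _
            exact mul_nonneg (hg p.1) (hg p.2)
        · intro i _ j _ hij
          simp only [Function.onFun, Finset.disjoint_left, Finset.HasAntidiagonal.mem_antidiagonal]
          intro p h1 h2
          omega
      -- reduce goal to shifted sum
      rw [Finset.sum_range_succ']
      simp only [hA0, zero_mul, pow_zero, add_zero]
      have hA0' : A 0 * x^0 = 0 := by rw [hA0]; ring
      have hshift : ∑ n ∈ Finset.range (N+1), A n * x^n
          = ∑ m ∈ Finset.range N, A (m+1) * x^(m+1) := by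
        rw [Finset.sum_range_succ']
        simp [hA0]
      suffices hstep : (1-ε) * ∑ m ∈ Finset.range (N+1), A (m+1) * x^(m+1) ≤ (1-ε) * c by
        exact le_of_mul_le_mul_left hstep h1ε
      have expand : (1-ε) * ∑ m ∈ Finset.range (N+1), A (m+1) * x^(m+1)
          = ∑ m ∈ Finset.range (N+1), ((1-ε) * A (m+1)) * x^(m+1) := by
        rw [Finset.mul_sum]; apply Finset.sum_congr rfl; intros; ring
      have e1 : ∀ m ∈ Finset.range (N+1), ((1-ε) * A (m+1)) * x^(m+1)
          = t*ε*(if m = 0 then (1:ℝ) else 0)*x^(m+1) + t*ε*x*(A m * x^m)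
            + ε * ∑ p ∈ Finset.HasAntidiagonal.antidiagonal (m+1), (A p.1 * x^p.1) * (A p.2 * x^p.2) := by
        intro m _
        rw [hrec m]
        have e2 : ∑ p ∈ Finset.HasAntidiagonal.antidiagonal (m+1), (A p.1 * x^p.1) * (A p.2 * x^p.2)
            = (∑ p ∈ Finset.HasAntidiagonal.antidiagonal (m+1), A p.1 * A p.2) * x^(m+1) := by
          rw [Finset.sum_mul]
          apply Finset.sum_congr rfl
          intro p hp
          rw [Finset.HasAntidiagonal.mem_antidiagonal] at hp
          rw [← hp, pow_add]; ring
        rw [e2, pow_succ]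
        ring
      have p1 : ∑ m ∈ Finset.range (N+1), t*ε*(if m = 0 then (1:ℝ) else 0)*x^(m+1)
          = t*ε*x := by
        rw [Finset.sum_eq_single 0]
        · simp
        · intro b _ hb; simp [hb]
        · intro h; exact absurd (Finset.mem_range.mpr N.succ_pos) h
      have p2 : ∑ m ∈ Finset.range (N+1), t*ε*x*(A m * x^m) ≤ t*ε*x*c := by
        rw [← Finset.mul_sum]
        exact mul_le_mul_of_nonneg_left ih (by positivity)
      have p3 : ∑ m ∈ Finset.range (N+1), ε * ∑ p ∈ Finset.HasAntidiagonal.antidiagonal (m+1),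
            (A p.1 * x^p.1) * (A p.2 * x^p.2) ≤ ε*(c*c) := by
        rw [← Finset.mul_sum]
        apply mul_le_mul_of_nonneg_left _ hε0.le
        refine le_trans hds ?_
        have hsum_nn : 0 ≤ ∑ n ∈ Finset.range (N+1), A n * x^n :=
          Finset.sum_nonneg (fun n _ => hg n)
        exact mul_le_mul ih ih hsum_nn hcpos.le
      have final : t*ε*x + t*ε*x*c + ε*(c*c) = (1-ε)*c := by
        linear_combination (ε*(1+c)) * htx + c * hkey
      calc (1-ε) * ∑ m ∈ Finset.range (N+1), A (m+1) * x^(m+1)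
          = ∑ m ∈ Finset.range (N+1), ((1-ε) * A (m+1)) * x^(m+1) := expand
        _ = ∑ m ∈ Finset.range (N+1), (t*ε*(if m = 0 then (1:ℝ) else 0)*x^(m+1)
              + t*ε*x*(A m * x^m)
              + ε * ∑ p ∈ Finset.HasAntidiagonal.antidiagonal (m+1), (A p.1 * x^p.1) * (A p.2 * x^p.2)) :=
            Finset.sum_congr rfl e1
        _ = ∑ m ∈ Finset.range (N+1), t*ε*(if m = 0 then (1:ℝ) else 0)*x^(m+1)
              + ∑ m ∈ Finset.range (N+1), t*ε*x*(A m * x^m)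
              + ∑ m ∈ Finset.range (N+1), ε * ∑ p ∈ Finset.HasAntidiagonal.antidiagonal (m+1),
                  (A p.1 * x^p.1) * (A p.2 * x^p.2) := by
            rw [Finset.sum_add_distrib, Finset.sum_add_distrib]
        _ ≤ t*ε*x + t*ε*x*c + ε*(c*c) := by
            rw [p1]; exact add_le_add (add_le_add le_rfl p2) p3
        _ = (1-ε)*c := final
  -- conclude
  intro n hn
  have h1 : A n * x^n ≤ c := by
    calc A n * x^n ≤ ∑ m ∈ Finset.range (n+1), A m * x^m := by
          apply Finset.single_le_sum (f := fun m => A m * x^m) (fun m _ => hg m)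
          simp
      _ ≤ c := main n
  have hxn : 0 < x^n := pow_pos hx n
  have h2 : A n ≤ c / x^n := (le_div_iff₀ hxn).mpr h1
  have h3 : c / x^n = c * t^n / c^(2*n) := by
    rw [hxdef, div_pow, pow_mul]
    field_simp
  have h4 : a n ≤ c / x^n := by rw [← hwc n hn]; exact h2
  exact le_of_le_of_eq h4 h3
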